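/- Consider the ranking profile with m = 3 candidates c1, c2, c3 and n = 7 voters whose rank vectors (σ_v(c1), σ_v(c2), σ_v(c3)) are: σ_1 = σ_2 = (1,2,3), σ_3 = σ_4 = (2,1,3), σ_5 = σ_6 = (2,3,1), σ_7 = (3,1,2). Then: (i) c1 is a Condorcet winner of this profile; (ii) for every real q ≥ 1, the permutation with rank vector (2,1,3) is the unique minimizer of ∑_{v=1}^7 d_q(σ, σ_v) over all permutations σ of {1,2,3}. Since this minimizer ranks c2 (and not the Condorcet winner c1) first, the q-Minkowski–Hölder based consensus-ranking (1-Fréchet mean) voting rule does not satisfy the Condorcet-winner property, for any q ≥ 1. -/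

import Mathlib

open Finset

/-- The rank (in `{1, …, m}`) that the ranking `σ` assigns to candidate `c`. -/
def rk {m : ℕ} (σ : Equiv.Perm (Fin m)) (c : Fin m) : ℕ := (σ c : ℕ) + 1

/-- The q-Minkowski–Hölder distance `d_q(σ,τ) = (∑_c |σ(c) − τ(c)|^q)^(1/q)`. -/
noncomputable def dq {m : ℕ} (q : ℝ) (σ τ : Equiv.Perm (Fin m)) : ℝ :=
  (∑ c, |(rk σ c : ℝ) - rk τ c| ^ q) ^ (1 / q)

/- ### Auxiliary lemmas -/

attribute [local simp] Matrix.cons_val_two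


lemma stmt17_classify : ∀ σ : Equiv.Perm (Fin 3), rk σ = ![1,2,3] ∨ rk σ = ![1,3,2] ∨
    rk σ = ![2,1,3] ∨ rk σ = ![2,3,1] ∨ rk σ = ![3,1,2] ∨ rk σ = ![3,2,1] := by decide

lemma stmt17_rk_inj {m : ℕ} {σ τ : Equiv.Perm (Fin m)} (h : rk σ = rk τ) : σ = τ := by
  apply Equiv.ext
  intro c
  have h2 := congrFun h c
  unfold rk at h2
  exact Fin.ext (by omega)

lemma stmt17_rat_rpow_lb (x r : ℝ) (hx : 0 < x) (hr : 0 ≤ r) (m n : ℕ) (hn : 0 < n)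
    (h : r ^ n ≤ x ^ m) : r ≤ x ^ ((m : ℝ) / n) := by
  have hn' : (0:ℝ) < n := by exact_mod_cast hn
  have h1 : r = (r ^ n) ^ ((1:ℝ)/n) := by
    rw [← Real.rpow_natCast r n, ← Real.rpow_mul hr]
    rw [mul_one_div, div_self hn'.ne']
    exact (Real.rpow_one r).symm
  rw [h1]
  calc (r ^ n) ^ ((1:ℝ)/n) ≤ (x ^ m) ^ ((1:ℝ)/n) := by
        apply Real.rpow_le_rpow (pow_nonneg hr n) h (by positivity)
    _ = x ^ ((m:ℝ)/n) := by
        rw [← Real.rpow_natCast x m, ← Real.rpow_mul hx.le, mul_one_div]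

lemma stmt17_norm_key (q : ℝ) (hq : 1 ≤ q) : (2:ℝ) < (6/5:ℝ) ^ q + 2 * (3/5:ℝ) ^ q := by
  have h65 : (1:ℝ) ≤ 6/5 := by norm_num
  have h35a : (0:ℝ) < 3/5 := by norm_num
  have h35b : (3/5:ℝ) ≤ 1 := by norm_num
  have mono1 : ∀ p : ℝ, p ≤ q → (6/5:ℝ) ^ p ≤ (6/5:ℝ) ^ q := fun p hp =>
    Real.rpow_le_rpow_of_exponent_le h65 hp
  have mono2 : ∀ p : ℝ, q ≤ p → (3/5:ℝ) ^ p ≤ (3/5:ℝ) ^ q := fun p hp =>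
    Real.rpow_le_rpow_of_exponent_ge h35a h35b hp
  have lb1 : ∀ (m n : ℕ) (r : ℝ), 0 < n → 0 ≤ r → r ^ n ≤ (6/5:ℝ) ^ m → ((m:ℝ)/n) ≤ q →
      r ≤ (6/5:ℝ) ^ q := fun m n r hn hr h hle =>
    le_trans (stmt17_rat_rpow_lb _ r (by norm_num) hr m n hn h) (mono1 _ hle)
  have lb2 : ∀ (m n : ℕ) (r : ℝ), 0 < n → 0 ≤ r → r ^ n ≤ (3/5:ℝ) ^ m → q ≤ ((m:ℝ)/n) →
      r ≤ (3/5:ℝ) ^ q := fun m n r hn hr h hle =>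
    le_trans (stmt17_rat_rpow_lb _ r (by norm_num) hr m n hn h) (mono2 _ hle)
  rcases le_or_gt q (3/2) with h | h
  · have a1 := lb1 1 1 (6/5) one_pos (by norm_num) (by norm_num) (by simpa using hq)
    have a2 := lb2 3 2 (23/50) two_pos (by norm_num) (by norm_num) (by push_cast; linarith)
    linarith
  · rcases le_or_gt q 2 with h2 | h2
    · have a1 := lb1 3 2 (131/100) two_pos (by norm_num) (by norm_num) (by push_cast; linarith)
      have a2 := lb2 2 1 (9/25) one_pos (by norm_num) (by norm_num) (by push_cast; linarith)
      linarith
    · rcases le_or_gt q (9/4) with h3 | h3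
      · have a1 := lb1 2 1 (36/25) one_pos (by norm_num) (by norm_num) (by push_cast; linarith)
        have a2 := lb2 9 4 (79/250) four_pos (by norm_num) (by norm_num) (by push_cast; linarith)
        linarith
      · rcases le_or_gt q (5/2) with h4 | h4
        · have a1 := lb1 9 4 (3/2) four_pos (by norm_num) (by norm_num) (by push_cast; linarith)
          have a2 := lb2 5 2 (139/500) two_pos (by norm_num) (by norm_num) (by push_cast; linarith)
          linarith
        · rcases le_or_gt q (11/4) with h5 | h5
          · have a1 := lb1 5 2 (157/100) two_pos (by norm_num) (by norm_num) (by push_cast; linarith)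
            have a2 := lb2 11 4 (49/200) four_pos (by norm_num) (by norm_num) (by push_cast; linarith)
            linarith
          · rcases le_or_gt q 3 with h6 | h6
            · have a1 := lb1 11 4 (33/20) four_pos (by norm_num) (by norm_num) (by push_cast; linarith)
              have a2 := lb2 3 1 (27/125) one_pos (by norm_num) (by norm_num) (by push_cast; linarith)
              linarith
            · rcases le_or_gt q (7/2) with h7 | h7
              · have a1 := lb1 3 1 (216/125) one_pos (by norm_num) (by norm_num) (by push_cast; linarith)
                have a2 := lb2 7 2 (167/1000) two_pos (by norm_num) (by norm_num) (by push_cast; linarith)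
                linarith
              · rcases le_or_gt q 4 with h8 | h8
                · have a1 := lb1 7 2 (189/100) two_pos (by norm_num) (by norm_num) (by push_cast; linarith)
                  have a2 := lb2 4 1 (81/625) one_pos (by norm_num) (by norm_num) (by push_cast; linarith)
                  linarith
                · have a1 := lb1 4 1 (1296/625) one_pos (by norm_num) (by norm_num) (by push_cast; linarith)
                  have a2 : (0:ℝ) < (3/5:ℝ) ^ q := Real.rpow_pos_of_pos h35a q
                  linarith

lemma stmt17_pow_root (x q : ℝ) (hx : 0 ≤ x) (hq : 0 < q) : (x ^ q) ^ (1/q) = x := by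
  rw [← Real.rpow_mul hx, mul_one_div, div_self hq.ne', Real.rpow_one]

lemma stmt17_key (q : ℝ) (hq : 1 ≤ q) :
    5 * (2:ℝ) ^ (1/q) < 3 * ((2:ℝ) ^ q + 2) ^ (1/q) := by
  have hq0 : (0:ℝ) < q := lt_of_lt_of_le one_pos hq
  have h2q : (0:ℝ) < (2:ℝ) ^ q := Real.rpow_pos_of_pos two_pos q
  have h5 : (0:ℝ) < (5:ℝ) ^ q := Real.rpow_pos_of_pos (by norm_num) q
  have h3 : (0:ℝ) < (3:ℝ) ^ q := Real.rpow_pos_of_pos (by norm_num) q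
  have big : 2 * (5:ℝ) ^ q < (6:ℝ) ^ q + 2 * (3:ℝ) ^ q := by
    have := stmt17_norm_key q hq
    have e1 : (6/5:ℝ) ^ q * (5:ℝ) ^ q = (6:ℝ) ^ q := by
      rw [← Real.mul_rpow (by norm_num) (by norm_num)]; norm_num
    have e2 : (3/5:ℝ) ^ q * (5:ℝ) ^ q = (3:ℝ) ^ q := by
      rw [← Real.mul_rpow (by norm_num) (by norm_num)]; norm_num
    nlinarith [this, h5]
  have l1 : 5 * (2:ℝ) ^ (1/q) = ((5:ℝ) ^ q * 2) ^ (1/q) := by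
    rw [Real.mul_rpow h5.le (by norm_num), stmt17_pow_root 5 q (by norm_num) hq0]
  have l2 : 3 * ((2:ℝ) ^ q + 2) ^ (1/q) = ((6:ℝ) ^ q + 2 * (3:ℝ) ^ q) ^ (1/q) := by
    have e3 : (6:ℝ) ^ q + 2 * (3:ℝ) ^ q = (3:ℝ) ^ q * ((2:ℝ) ^ q + 2) := by
      have h63 : (3:ℝ) ^ q * (2:ℝ) ^ q = (6:ℝ) ^ q := by
        rw [← Real.mul_rpow (by norm_num) (by norm_num)]; norm_num
      linarith [h63]
    rw [e3, Real.mul_rpow h3.le (by positivity), stmt17_pow_root 3 q (by norm_num) hq0]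
  rw [l1, l2]
  exact Real.rpow_lt_rpow (by positivity) (by linarith) (by positivity)

lemma stmt17_ab (q : ℝ) (hq : 1 ≤ q) : (2:ℝ) ^ (1/q) < ((2:ℝ) ^ q + 2) ^ (1/q) := by
  have hq0 : (0:ℝ) < q := lt_of_lt_of_le one_pos hq
  have h2q : (0:ℝ) < (2:ℝ) ^ q := Real.rpow_pos_of_pos two_pos q
  exact Real.rpow_lt_rpow (by norm_num) (by linarith) (by positivity)

lemma stmt17_ceq (q : ℝ) (hq : 1 ≤ q) :
    ((2:ℝ) ^ q + (2:ℝ) ^ q) ^ (1/q) = 2 * (2:ℝ) ^ (1/q) := by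
  have hq0 : (0:ℝ) < q := lt_of_lt_of_le one_pos hq
  have h2q : (0:ℝ) < (2:ℝ) ^ q := Real.rpow_pos_of_pos two_pos q
  have h : (2:ℝ) ^ q + (2:ℝ) ^ q = (2:ℝ) ^ q * 2 := by ring
  rw [h, Real.mul_rpow h2q.le (by norm_num), stmt17_pow_root 2 q (by norm_num) hq0]

lemma stmt17_dq3 (q : ℝ) (σ τ : Equiv.Perm (Fin 3)) (v w : Fin 3 → ℕ)
    (hσ : rk σ = v) (hτ : rk τ = w) :
    dq q σ τ = (|(v 0 : ℝ) - w 0| ^ q + |(v 1 : ℝ) - w 1| ^ q + |(v 2 : ℝ) - w 2| ^ q) ^ (1/q) := by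
  unfold dq
  rw [Fin.sum_univ_three, hσ, hτ]

/-- On the profile σ₁ = σ₂ = (1,2,3), σ₃ = σ₄ = (2,1,3), σ₅ = σ₆ = (2,3,1), σ₇ = (3,1,2):
(i) `c1` is a Condorcet winner; (ii) for every real `q ≥ 1` the permutation π = (2,1,3) is
the unique minimizer of `∑ᵥ d_q(σ, σᵥ)`; π ranks `c2` first, so the q-Minkowski–Hölder
based consensus-ranking rule fails the Condorcet-winner property for every `q ≥ 1`. -/
theorem stmt_17 (σ1 σ2 σ3 σ4 σ5 σ6 σ7 π : Equiv.Perm (Fin 3))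
    (h1 : rk σ1 = ![1,2,3]) (h2 : rk σ2 = ![1,2,3])
    (h3 : rk σ3 = ![2,1,3]) (h4 : rk σ4 = ![2,1,3])
    (h5 : rk σ5 = ![2,3,1]) (h6 : rk σ6 = ![2,3,1])
    (h7 : rk σ7 = ![3,1,2]) (hπ : rk π = ![2,1,3]) :
    (∀ c : Fin 3, c ≠ 0 →
      (univ.filter fun v =>
          rk (![σ1,σ2,σ3,σ4,σ5,σ6,σ7] v) c < rk (![σ1,σ2,σ3,σ4,σ5,σ6,σ7] v) 0).card <
        (univ.filter fun v =>
          rk (![σ1,σ2,σ3,σ4,σ5,σ6,σ7] v) 0 < rk (![σ1,σ2,σ3,σ4,σ5,σ6,σ7] v) c).card) ∧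
    (∀ q : ℝ, 1 ≤ q → ∀ σ : Equiv.Perm (Fin 3), σ ≠ π →
      ∑ v, dq q π (![σ1,σ2,σ3,σ4,σ5,σ6,σ7] v) <
        ∑ v, dq q σ (![σ1,σ2,σ3,σ4,σ5,σ6,σ7] v)) ∧
    rk π 1 = 1 := by
  have m0 : (![σ1,σ2,σ3,σ4,σ5,σ6,σ7] : Fin 7 → Equiv.Perm (Fin 3)) 0 = σ1 := rfl
  have m1 : (![σ1,σ2,σ3,σ4,σ5,σ6,σ7] : Fin 7 → Equiv.Perm (Fin 3)) 1 = σ2 := rfl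
  have m2 : (![σ1,σ2,σ3,σ4,σ5,σ6,σ7] : Fin 7 → Equiv.Perm (Fin 3)) 2 = σ3 := rfl
  have m3 : (![σ1,σ2,σ3,σ4,σ5,σ6,σ7] : Fin 7 → Equiv.Perm (Fin 3)) 3 = σ4 := rfl
  have m4 : (![σ1,σ2,σ3,σ4,σ5,σ6,σ7] : Fin 7 → Equiv.Perm (Fin 3)) 4 = σ5 := rfl
  have m5 : (![σ1,σ2,σ3,σ4,σ5,σ6,σ7] : Fin 7 → Equiv.Perm (Fin 3)) 5 = σ6 := rfl
  have m6 : (![σ1,σ2,σ3,σ4,σ5,σ6,σ7] : Fin 7 → Equiv.Perm (Fin 3)) 6 = σ7 := rfl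
  refine ⟨?_, ?_, ?_⟩
  · -- Condorcet
    intro c hc
    rw [Finset.card_filter, Finset.card_filter, Fin.sum_univ_seven, Fin.sum_univ_seven,
      m0, m1, m2, m3, m4, m5, m6, h1, h2, h3, h4, h5, h6, h7]
    fin_cases c
    · simp at hc
    · norm_num
    · norm_num
  · -- uniqueness of the consensus
    intro q hq σ hσne
    have hq0 : (0:ℝ) < q := lt_of_lt_of_le one_pos hq
    have ha : (0:ℝ) < (2:ℝ) ^ (1/q) := Real.rpow_pos_of_pos two_pos _
    have h2q : (0:ℝ) < (2:ℝ) ^ q := Real.rpow_pos_of_pos two_pos q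
    have hb : (0:ℝ) < ((2:ℝ) ^ q + 2) ^ (1/q) := Real.rpow_pos_of_pos (by linarith) _
    have hkey := stmt17_key q hq
    have hab := stmt17_ab q hq
    -- compute the π-sum
    have eπ1 : dq q π σ1 = (2:ℝ) ^ (1/q) := by
      rw [stmt17_dq3 q π σ1 _ _ hπ h1]
      norm_num [Real.one_rpow, Real.zero_rpow hq0.ne', Real.zero_rpow (inv_ne_zero hq0.ne')]
    have eπ2 : dq q π σ2 = (2:ℝ) ^ (1/q) := by
      rw [stmt17_dq3 q π σ2 _ _ hπ h2]
      norm_num [Real.one_rpow, Real.zero_rpow hq0.ne', Real.zero_rpow (inv_ne_zero hq0.ne')]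
    have eπ3 : dq q π σ3 = 0 := by
      rw [stmt17_dq3 q π σ3 _ _ hπ h3]
      norm_num [Real.zero_rpow hq0.ne', Real.zero_rpow (inv_ne_zero hq0.ne')]
    have eπ4 : dq q π σ4 = 0 := by
      rw [stmt17_dq3 q π σ4 _ _ hπ h4]
      norm_num [Real.zero_rpow hq0.ne', Real.zero_rpow (inv_ne_zero hq0.ne')]
    have eπ5 : dq q π σ5 = 2 * (2:ℝ) ^ (1/q) := by
      rw [stmt17_dq3 q π σ5 _ _ hπ h5, ← stmt17_ceq q hq]
      norm_num [Real.zero_rpow hq0.ne']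
    have eπ6 : dq q π σ6 = 2 * (2:ℝ) ^ (1/q) := by
      rw [stmt17_dq3 q π σ6 _ _ hπ h6, ← stmt17_ceq q hq]
      norm_num [Real.zero_rpow hq0.ne']
    have eπ7 : dq q π σ7 = (2:ℝ) ^ (1/q) := by
      rw [stmt17_dq3 q π σ7 _ _ hπ h7]
      norm_num [Real.one_rpow, Real.zero_rpow hq0.ne', Real.zero_rpow (inv_ne_zero hq0.ne')]
    rw [Fin.sum_univ_seven, Fin.sum_univ_seven, m0, m1, m2, m3, m4, m5, m6,
      eπ1, eπ2, eπ3, eπ4, eπ5, eπ6, eπ7]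
    rcases stmt17_classify σ with hσ | hσ | hσ | hσ | hσ | hσ
    · -- σ = (1,2,3)
      have e1 : dq q σ σ1 = 0 := by
        rw [stmt17_dq3 q σ σ1 _ _ hσ h1]
        norm_num [Real.zero_rpow hq0.ne', Real.zero_rpow (inv_ne_zero hq0.ne')]
      have e2 : dq q σ σ2 = 0 := by
        rw [stmt17_dq3 q σ σ2 _ _ hσ h2]
        norm_num [Real.zero_rpow hq0.ne', Real.zero_rpow (inv_ne_zero hq0.ne')]
      have e3 : dq q σ σ3 = (2:ℝ) ^ (1/q) := by
        rw [stmt17_dq3 q σ σ3 _ _ hσ h3]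
        norm_num [Real.one_rpow, Real.zero_rpow hq0.ne', Real.zero_rpow (inv_ne_zero hq0.ne')]
      have e4 : dq q σ σ4 = (2:ℝ) ^ (1/q) := by
        rw [stmt17_dq3 q σ σ4 _ _ hσ h4]
        norm_num [Real.one_rpow, Real.zero_rpow hq0.ne', Real.zero_rpow (inv_ne_zero hq0.ne')]
      have e5 : dq q σ σ5 = ((2:ℝ) ^ q + 2) ^ (1/q) := by
        rw [stmt17_dq3 q σ σ5 _ _ hσ h5]
        norm_num [Real.one_rpow]
        ring_nf
      have e6 : dq q σ σ6 = ((2:ℝ) ^ q + 2) ^ (1/q) := by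
        rw [stmt17_dq3 q σ σ6 _ _ hσ h6]
        norm_num [Real.one_rpow]
        ring_nf
      have e7 : dq q σ σ7 = ((2:ℝ) ^ q + 2) ^ (1/q) := by
        rw [stmt17_dq3 q σ σ7 _ _ hσ h7]
        norm_num [Real.one_rpow]
        ring_nf
      rw [e1, e2, e3, e4, e5, e6, e7]
      linarith
    · -- σ = (1,3,2)
      have e1 : dq q σ σ1 = (2:ℝ) ^ (1/q) := by
        rw [stmt17_dq3 q σ σ1 _ _ hσ h1]
        norm_num [Real.one_rpow, Real.zero_rpow hq0.ne', Real.zero_rpow (inv_ne_zero hq0.ne')]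
      have e2 : dq q σ σ2 = (2:ℝ) ^ (1/q) := by
        rw [stmt17_dq3 q σ σ2 _ _ hσ h2]
        norm_num [Real.one_rpow, Real.zero_rpow hq0.ne', Real.zero_rpow (inv_ne_zero hq0.ne')]
      have e3 : dq q σ σ3 = ((2:ℝ) ^ q + 2) ^ (1/q) := by
        rw [stmt17_dq3 q σ σ3 _ _ hσ h3]
        norm_num [Real.one_rpow]
        ring_nf
      have e4 : dq q σ σ4 = ((2:ℝ) ^ q + 2) ^ (1/q) := by
        rw [stmt17_dq3 q σ σ4 _ _ hσ h4]
        norm_num [Real.one_rpow]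
        ring_nf
      have e5 : dq q σ σ5 = (2:ℝ) ^ (1/q) := by
        rw [stmt17_dq3 q σ σ5 _ _ hσ h5]
        norm_num [Real.one_rpow, Real.zero_rpow hq0.ne', Real.zero_rpow (inv_ne_zero hq0.ne')]
      have e6 : dq q σ σ6 = (2:ℝ) ^ (1/q) := by
        rw [stmt17_dq3 q σ σ6 _ _ hσ h6]
        norm_num [Real.one_rpow, Real.zero_rpow hq0.ne', Real.zero_rpow (inv_ne_zero hq0.ne')]
      have e7 : dq q σ σ7 = 2 * (2:ℝ) ^ (1/q) := by
        rw [stmt17_dq3 q σ σ7 _ _ hσ h7, ← stmt17_ceq q hq]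
        norm_num [Real.zero_rpow hq0.ne']
      rw [e1, e2, e3, e4, e5, e6, e7]
      linarith
    · -- σ = (2,1,3) = π : contradiction
      exact absurd (stmt17_rk_inj (hσ.trans hπ.symm)) hσne
    · -- σ = (2,3,1)
      have e1 : dq q σ σ1 = ((2:ℝ) ^ q + 2) ^ (1/q) := by
        rw [stmt17_dq3 q σ σ1 _ _ hσ h1]
        norm_num [Real.one_rpow]
        ring_nf
      have e2 : dq q σ σ2 = ((2:ℝ) ^ q + 2) ^ (1/q) := by
        rw [stmt17_dq3 q σ σ2 _ _ hσ h2]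
        norm_num [Real.one_rpow]
        ring_nf
      have e3 : dq q σ σ3 = 2 * (2:ℝ) ^ (1/q) := by
        rw [stmt17_dq3 q σ σ3 _ _ hσ h3, ← stmt17_ceq q hq]
        norm_num [Real.zero_rpow hq0.ne']
      have e4 : dq q σ σ4 = 2 * (2:ℝ) ^ (1/q) := by
        rw [stmt17_dq3 q σ σ4 _ _ hσ h4, ← stmt17_ceq q hq]
        norm_num [Real.zero_rpow hq0.ne']
      have e5 : dq q σ σ5 = 0 := by
        rw [stmt17_dq3 q σ σ5 _ _ hσ h5]
        norm_num [Real.zero_rpow hq0.ne', Real.zero_rpow (inv_ne_zero hq0.ne')]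
      have e6 : dq q σ σ6 = 0 := by
        rw [stmt17_dq3 q σ σ6 _ _ hσ h6]
        norm_num [Real.zero_rpow hq0.ne', Real.zero_rpow (inv_ne_zero hq0.ne')]
      have e7 : dq q σ σ7 = ((2:ℝ) ^ q + 2) ^ (1/q) := by
        rw [stmt17_dq3 q σ σ7 _ _ hσ h7]
        norm_num [Real.one_rpow]
        ring_nf
      rw [e1, e2, e3, e4, e5, e6, e7]
      linarith
    · -- σ = (3,1,2)
      have e1 : dq q σ σ1 = ((2:ℝ) ^ q + 2) ^ (1/q) := by
        rw [stmt17_dq3 q σ σ1 _ _ hσ h1]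
        norm_num [Real.one_rpow]
        ring_nf
      have e2 : dq q σ σ2 = ((2:ℝ) ^ q + 2) ^ (1/q) := by
        rw [stmt17_dq3 q σ σ2 _ _ hσ h2]
        norm_num [Real.one_rpow]
        ring_nf
      have e3 : dq q σ σ3 = (2:ℝ) ^ (1/q) := by
        rw [stmt17_dq3 q σ σ3 _ _ hσ h3]
        norm_num [Real.one_rpow, Real.zero_rpow hq0.ne', Real.zero_rpow (inv_ne_zero hq0.ne')]
      have e4 : dq q σ σ4 = (2:ℝ) ^ (1/q) := by
        rw [stmt17_dq3 q σ σ4 _ _ hσ h4]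
        norm_num [Real.one_rpow, Real.zero_rpow hq0.ne', Real.zero_rpow (inv_ne_zero hq0.ne')]
      have e5 : dq q σ σ5 = ((2:ℝ) ^ q + 2) ^ (1/q) := by
        rw [stmt17_dq3 q σ σ5 _ _ hσ h5]
        norm_num [Real.one_rpow]
        ring_nf
      have e6 : dq q σ σ6 = ((2:ℝ) ^ q + 2) ^ (1/q) := by
        rw [stmt17_dq3 q σ σ6 _ _ hσ h6]
        norm_num [Real.one_rpow]
        ring_nf
      have e7 : dq q σ σ7 = 0 := by
        rw [stmt17_dq3 q σ σ7 _ _ hσ h7]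
        norm_num [Real.zero_rpow hq0.ne', Real.zero_rpow (inv_ne_zero hq0.ne')]
      rw [e1, e2, e3, e4, e5, e6, e7]
      linarith
    · -- σ = (3,2,1)
      have e1 : dq q σ σ1 = 2 * (2:ℝ) ^ (1/q) := by
        rw [stmt17_dq3 q σ σ1 _ _ hσ h1, ← stmt17_ceq q hq]
        norm_num [Real.zero_rpow hq0.ne']
      have e2 : dq q σ σ2 = 2 * (2:ℝ) ^ (1/q) := by
        rw [stmt17_dq3 q σ σ2 _ _ hσ h2, ← stmt17_ceq q hq]
        norm_num [Real.zero_rpow hq0.ne']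
      have e3 : dq q σ σ3 = ((2:ℝ) ^ q + 2) ^ (1/q) := by
        rw [stmt17_dq3 q σ σ3 _ _ hσ h3]
        norm_num [Real.one_rpow]
        ring_nf
      have e4 : dq q σ σ4 = ((2:ℝ) ^ q + 2) ^ (1/q) := by
        rw [stmt17_dq3 q σ σ4 _ _ hσ h4]
        norm_num [Real.one_rpow]
        ring_nf
      have e5 : dq q σ σ5 = (2:ℝ) ^ (1/q) := by
        rw [stmt17_dq3 q σ σ5 _ _ hσ h5]
        norm_num [Real.one_rpow, Real.zero_rpow hq0.ne', Real.zero_rpow (inv_ne_zero hq0.ne')]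
      have e6 : dq q σ σ6 = (2:ℝ) ^ (1/q) := by
        rw [stmt17_dq3 q σ σ6 _ _ hσ h6]
        norm_num [Real.one_rpow, Real.zero_rpow hq0.ne', Real.zero_rpow (inv_ne_zero hq0.ne')]
      have e7 : dq q σ σ7 = (2:ℝ) ^ (1/q) := by
        rw [stmt17_dq3 q σ σ7 _ _ hσ h7]
        norm_num [Real.one_rpow, Real.zero_rpow hq0.ne', Real.zero_rpow (inv_ne_zero hq0.ne')]
      rw [e1, e2, e3, e4, e5, e6, e7]
      linarith
  · rw [hπ]
    rfl
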